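/- Let $d\ge1$. For every $x\in\mathbb{R}^{d}\setminus\{0\}$ and every multi-index $\alpha\in\mathbb{N}^{d}$, the Euclidean norm function satisfies $\big|\partial^{\alpha}|x|\big|\le(3d)^{|\alpha|+1}\,\alpha!\,|x|^{1-|\alpha|}$. -/

import Mathlib

open scoped BigOperators

noncomputable section

/-- Japanese bracket `⟨w⟩ = (1+|w|²)^{1/2}`. -/
def jap {ι : Type*} [Fintype ι] (w : EuclideanSpace ℝ ι) : ℝ :=
  Real.sqrt (1 + ‖w‖ ^ 2)

/-- `|α|` for a multi-index. -/
def mdeg {ι : Type*} [Fintype ι] (α : ι → ℕ) : ℕ := ∑ i, α i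

/-- `α!` for a multi-index. -/
def mfact {ι : Type*} [Fintype ι] (α : ι → ℕ) : ℕ := ∏ i, Nat.factorial (α i)

/-- Partial derivative in the `i`-th coordinate direction. -/
def pd {ι : Type*} [Fintype ι] [DecidableEq ι] {F : Type*} [NormedAddCommGroup F]
    [NormedSpace ℝ F] (i : ι) (f : EuclideanSpace ℝ ι → F) : EuclideanSpace ℝ ι → F :=
  fun x => fderiv ℝ f x (EuclideanSpace.single i 1)

/-- Iterated partial derivative along a list of directions. -/
def listDeriv {ι : Type*} [Fintype ι] [DecidableEq ι] {F : Type*} [NormedAddCommGroup F]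
    [NormedSpace ℝ F] : List ι → (EuclideanSpace ℝ ι → F) → EuclideanSpace ℝ ι → F
  | [], f => f
  | i :: l, f => pd i (listDeriv l f)

/-- Multi-index partial derivative `∂^α`. -/
def mderiv {ι : Type*} [Fintype ι] [DecidableEq ι] {F : Type*} [NormedAddCommGroup F]
    [NormedSpace ℝ F] (α : ι → ℕ) (f : EuclideanSpace ℝ ι → F) : EuclideanSpace ℝ ι → F :=
  listDeriv (Finset.univ.toList.flatMap fun i => List.replicate (α i) i) f

/-- `D^α = i^{-|α|} ∂^α`. -/
def Dm {ι : Type*} [Fintype ι] [DecidableEq ι] {F : Type*} [NormedAddCommGroup F]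
    [NormedSpace ℂ F] (α : ι → ℕ) (f : EuclideanSpace ℝ ι → F) : EuclideanSpace ℝ ι → F :=
  fun w => ((-Complex.I) ^ mdeg α) • mderiv α f w

/-- `⟨x⟩` for the `x`-part of a phase-space point `w = (x, ξ)`. -/
def japX {d : ℕ} (w : EuclideanSpace ℝ (Fin d ⊕ Fin d)) : ℝ :=
  Real.sqrt (1 + ∑ i : Fin d, (w (Sum.inl i)) ^ 2)

/-- `⟨ξ⟩` for the `ξ`-part of a phase-space point `w = (x, ξ)`. -/
def japXi {d : ℕ} (w : EuclideanSpace ℝ (Fin d ⊕ Fin d)) : ℝ :=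
  Real.sqrt (1 + ∑ i : Fin d, (w (Sum.inr i)) ^ 2)

/-- The set `Q_B`. -/
def QQ (d : ℕ) (B : ℝ) : Set (EuclideanSpace ℝ (Fin d ⊕ Fin d)) :=
  {w | japX w < B ∧ japXi w < B}

/-- `∂_ξ^α D_x^β f`. -/
def pdXxi {d : ℕ} {F : Type*} [NormedAddCommGroup F] [NormedSpace ℂ F]
    (β α : Fin d → ℕ) (f : EuclideanSpace ℝ (Fin d ⊕ Fin d) → F) :
    EuclideanSpace ℝ (Fin d ⊕ Fin d) → F :=
  fun w => ((-Complex.I) ^ mdeg β) • mderiv (Sum.elim β α) f w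

/-- `(a^{#(n+1)})_j`  (so `sharpIter a n j = (a^{#(n+1)})_j`). -/
def sharpIter {d : ℕ} (a : EuclideanSpace ℝ (Fin d ⊕ Fin d) → ℂ) :
    ℕ → ℕ → EuclideanSpace ℝ (Fin d ⊕ Fin d) → ℂ
  | 0, 0 => a
  | 0, _ + 1 => fun _ => 0
  | n + 1, j => fun w =>
      ∑ sl ∈ Finset.HasAntidiagonal.antidiagonal j,
        ∑ p ∈ Finset.HasAntidiagonal.antidiagonal sl.2,
          ∑ α ∈ Finset.Nat.antidiagonalTuple d p.1,
            ∑ β ∈ Finset.Nat.antidiagonalTuple d p.2,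
              ((-1 : ℂ) ^ mdeg β / ((mfact α : ℂ) * (mfact β : ℂ) * 2 ^ sl.2)) *
                (pdXxi β α (sharpIter a n sl.1) w * pdXxi α β a w)

/-- `a^{(#n)} = ∑_j (a^{#n})_j`, with `a^{(#0)} = 1`. -/
def sharpTot {d : ℕ} (a : EuclideanSpace ℝ (Fin d ⊕ Fin d) → ℂ) :
    ℕ → EuclideanSpace ℝ (Fin d ⊕ Fin d) → ℂ
  | 0 => fun _ => 1
  | n + 1 => fun w => ∑' j, sharpIter a n j w

/-- `P(t) = ∑ t^n / M̂_n`. -/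
def Pser (Mh : ℕ → ℝ) (t : ℝ) : ℝ := ∑' n, t ^ n / Mh n

/-- The associated function `M(t) = sup_p ln₊ (t^p / M_p)`. -/
def assocFn (M : ℕ → ℝ) (t : ℝ) : ℝ := ⨆ p : ℕ, max (Real.log (t ^ p / M p)) 0

namespace S13

variable {d : ℕ}

def tEval (n : ℕ) (t : ℝ × (Fin d → ℕ)) (x : EuclideanSpace ℝ (Fin d)) : ℝ :=
  t.1 * (∏ j, x j ^ t.2 j) * ‖x‖ ^ ((1 : ℤ) - n - (∑ j, t.2 j))

def d1 (i : Fin d) (t : ℝ × (Fin d → ℕ)) : ℝ × (Fin d → ℕ) :=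
  (t.1 * (t.2 i : ℝ), Function.update t.2 i (t.2 i - 1))

def d2 (n : ℕ) (i : Fin d) (t : ℝ × (Fin d → ℕ)) : ℝ × (Fin d → ℕ) :=
  (t.1 * (((1 : ℤ) - n - (∑ j, t.2 j : ℕ) : ℤ) : ℝ), Function.update t.2 i (t.2 i + 1))

def stepL (n : ℕ) (i : Fin d) (L : List (ℝ × (Fin d → ℕ))) : List (ℝ × (Fin d → ℕ)) :=
  L.flatMap fun t => [d1 i t, d2 n i t]

def FL (n : ℕ) (L : List (ℝ × (Fin d → ℕ))) (x : EuclideanSpace ℝ (Fin d)) : ℝ :=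
  (L.map fun t => tEval n t x).sum

lemma norm_hasFDerivAt {x : EuclideanSpace ℝ (Fin d)} (hx : x ≠ 0) :
    HasFDerivAt (fun y : EuclideanSpace ℝ (Fin d) => ‖y‖) (‖x‖⁻¹ • innerSL ℝ x) x := by
  have h0 : ‖x‖ ≠ 0 := norm_ne_zero_iff.2 hx
  have h1 : HasFDerivAt (fun y : EuclideanSpace ℝ (Fin d) => ‖y‖ ^ 2) (2 • innerSL ℝ x) x :=
    (hasStrictFDerivAt_norm_sq x).hasFDerivAt
  have h2 : HasDerivAt Real.sqrt (1 / (2 * Real.sqrt (‖x‖ ^ 2))) (‖x‖ ^ 2) :=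
    Real.hasDerivAt_sqrt (by positivity)
  have h3 := h2.comp_hasFDerivAt x h1
  have he : (fun y : EuclideanSpace ℝ (Fin d) => Real.sqrt (‖y‖ ^ 2))
      = fun y : EuclideanSpace ℝ (Fin d) => ‖y‖ := by
    funext y; rw [Real.sqrt_sq (norm_nonneg y)]
  rw [Function.comp_def, he] at h3
  have he2 : ‖x‖⁻¹ • innerSL ℝ x = (1 / (2 * Real.sqrt (‖x‖ ^ 2))) • (2 • innerSL ℝ x) := by
    ext v
    simp only [ContinuousLinearMap.smul_apply, Real.sqrt_sq (norm_nonneg x), smul_eq_mul]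
    field_simp
    ring
  rw [he2]; exact h3

lemma normZ_hasFDerivAt (m : ℤ) {x : EuclideanSpace ℝ (Fin d)} (hx : x ≠ 0) :
    HasFDerivAt (fun y : EuclideanSpace ℝ (Fin d) => ‖y‖ ^ m)
      (((m : ℝ) * ‖x‖ ^ (m - 1) * ‖x‖⁻¹) • innerSL ℝ x) x := by
  have h0 : ‖x‖ ≠ 0 := norm_ne_zero_iff.2 hx
  have h2 : HasDerivAt (fun s : ℝ => s ^ m) ((m : ℝ) * ‖x‖ ^ (m - 1)) ‖x‖ :=
    hasDerivAt_zpow m _ (Or.inl h0)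
  have h3 := h2.comp_hasFDerivAt x (norm_hasFDerivAt hx)
  rw [Function.comp_def] at h3
  have he2 : ((m : ℝ) * ‖x‖ ^ (m - 1) * ‖x‖⁻¹) • innerSL ℝ x
      = ((m : ℝ) * ‖x‖ ^ (m - 1)) • (‖x‖⁻¹ • innerSL ℝ x) := by
    rw [smul_smul, mul_assoc]
  rw [he2]; exact h3

lemma prod_hasFDerivAt (e : Fin d → ℕ) (x : EuclideanSpace ℝ (Fin d)) :
    HasFDerivAt (fun y : EuclideanSpace ℝ (Fin d) => ∏ j, y j ^ e j)
      (∑ j, (∏ k ∈ Finset.univ.erase j, x k ^ e k) •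
        (((e j : ℝ) * x j ^ (e j - 1)) •
          (EuclideanSpace.proj j : EuclideanSpace ℝ (Fin d) →L[ℝ] ℝ))) x := by
  refine HasFDerivAt.finset_prod fun j _ => ?_
  exact (hasDerivAt_pow (e j) (x j)).comp_hasFDerivAt x
    (EuclideanSpace.proj (𝕜 := ℝ) j).hasFDerivAt

lemma term_step (n : ℕ) (t : ℝ × (Fin d → ℕ)) (i : Fin d)
    {x : EuclideanSpace ℝ (Fin d)} (hx : x ≠ 0) :
    ∃ Φ : EuclideanSpace ℝ (Fin d) →L[ℝ] ℝ, HasFDerivAt (tEval n t) Φ x ∧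
      Φ (EuclideanSpace.single i 1) =
        tEval (n+1) (d1 i t) x + tEval (n+1) (d2 n i t) x := by
  obtain ⟨c, e⟩ := t
  have h0 : ‖x‖ ≠ 0 := norm_ne_zero_iff.2 hx
  set m : ℤ := 1 - (n : ℤ) - (∑ j, e j : ℕ) with hm
  have hP := prod_hasFDerivAt e x
  have hQ := normZ_hasFDerivAt m hx
  have hPQ := (hP.mul hQ).const_mul c
  have hfe : tEval n (c, e) = fun y : EuclideanSpace ℝ (Fin d) =>
      c * ((∏ j, y j ^ e j) * ‖y‖ ^ m) := by
    funext y; simp only [tEval, hm]; ring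
  simp only [Pi.mul_apply] at hPQ
  rw [← hfe] at hPQ
  refine ⟨_, hPQ, ?_⟩
  · simp only [ContinuousLinearMap.smul_apply, ContinuousLinearMap.add_apply,
      ContinuousLinearMap.coe_sum', Finset.sum_apply, smul_eq_mul, innerSL_apply_apply,
      EuclideanSpace.inner_single_right, PiLp.proj_apply,
      EuclideanSpace.single_apply, RCLike.conj_to_real]
    simp only [mul_ite, mul_one, mul_zero, Finset.sum_ite_eq', Finset.mem_univ, if_true]
    simp only [tEval, d1, d2]
    have hprod : ∀ b : ℕ, (∏ j, x j ^ (Function.update e i b j))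
        = x i ^ b * ∏ k ∈ Finset.univ.erase i, x k ^ e k := by
      intro b
      rw [← Finset.mul_prod_erase Finset.univ _ (Finset.mem_univ i), Function.update_self]
      congr 1
      exact Finset.prod_congr rfl fun k hk => by
        rw [Function.update_of_ne (Finset.ne_of_mem_erase hk)]
    have hsum : ∀ b : ℕ, (∑ j, Function.update e i b j)
        = b + ∑ k ∈ Finset.univ.erase i, e k := by
      intro b
      rw [← Finset.add_sum_erase Finset.univ _ (Finset.mem_univ i), Function.update_self]
      congr 1
      exact Finset.sum_congr rfl fun k hk => by
        rw [Function.update_of_ne (Finset.ne_of_mem_erase hk)]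
    have hS : (∑ j, e j) = e i + ∑ k ∈ Finset.univ.erase i, e k :=
      (Finset.add_sum_erase Finset.univ e (Finset.mem_univ i)).symm
    have hPe : (∏ j, x j ^ e j) = x i ^ e i * ∏ k ∈ Finset.univ.erase i, x k ^ e k :=
      (Finset.mul_prod_erase Finset.univ _ (Finset.mem_univ i)).symm
    set S' : ℕ := ∑ k ∈ Finset.univ.erase i, e k with hS'
    set P' : ℝ := ∏ k ∈ Finset.univ.erase i, x k ^ e k with hP'
    rw [hprod, hprod, hsum, hsum, hS, hPe]
    rcases Nat.eq_zero_or_pos (e i) with he | he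
    · rw [he]
      simp only [Nat.zero_sub, Nat.cast_zero, zero_mul, mul_zero, zero_add, zero_mul,
        add_zero, pow_zero, one_mul, Nat.cast_ofNat]
      have hE : (1 : ℤ) - ((n + 1 : ℕ) : ℤ) - ((1 + S' : ℕ) : ℤ) = m - 2 := by
        rw [hm, hS, he]; push_cast; ring
      rw [hE, show m - 2 = m - 1 - 1 by ring, zpow_sub₀ h0 (m-1) 1, zpow_one]
      field_simp
      simp only [hm, hS, he]
      push_cast
      ring
    · obtain ⟨k, hk⟩ : ∃ k, e i = k + 1 := ⟨e i - 1, (Nat.succ_pred_eq_of_pos he).symm⟩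
      rw [hk]
      simp only [Nat.add_sub_cancel]
      have hE1 : (1 : ℤ) - ((n + 1 : ℕ) : ℤ) - ((k + S' : ℕ) : ℤ) = m := by
        rw [hm, hS, hk]; push_cast; ring
      have hE2 : (1 : ℤ) - ((n + 1 : ℕ) : ℤ) - ((k + 1 + 1 + S' : ℕ) : ℤ) = m - 2 := by
        rw [hm, hS, hk]; push_cast; ring
      rw [hE1, hE2, show m - 2 = m - 1 - 1 by ring, zpow_sub₀ h0 (m-1) 1, zpow_one]
      field_simp
      simp only [hm, hS, hk]
      push_cast
      ring

lemma list_step (n : ℕ) (L : List (ℝ × (Fin d → ℕ))) (i : Fin d)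
    {x : EuclideanSpace ℝ (Fin d)} (hx : x ≠ 0) :
    ∃ Φ : EuclideanSpace ℝ (Fin d) →L[ℝ] ℝ, HasFDerivAt (FL n L) Φ x ∧
      Φ (EuclideanSpace.single i 1) = FL (n+1) (stepL n i L) x := by
  induction L with
  | nil =>
    refine ⟨0, ?_, by simp [FL, stepL]⟩
    have : FL n ([] : List (ℝ × (Fin d → ℕ))) = fun _ => (0 : ℝ) := by
      funext y; simp [FL]
    rw [this]
    exact hasFDerivAt_const 0 x
  | cons t L ih =>
    obtain ⟨Φ, hΦ, hv⟩ := ih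
    obtain ⟨Ψ, hΨ, hw⟩ := term_step n t i hx
    refine ⟨Ψ + Φ, ?_, ?_⟩
    · have : FL n (t :: L) = fun y => tEval n t y + FL n L y := by
        funext y; simp [FL]
      rw [this]; exact hΨ.add hΦ
    · simp only [ContinuousLinearMap.add_apply, hv, hw]
      simp only [FL, stepL, List.flatMap_cons, List.map_append, List.sum_append,
        List.map_cons, List.sum_cons, List.map_nil, List.sum_nil, add_zero]

lemma sum_abs_stepL (n : ℕ) (i : Fin d) (L : List (ℝ × (Fin d → ℕ))) :
    ((stepL n i L).map fun t => |t.1|).sum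
      = (L.map fun t => |(d1 i t).1| + |(d2 n i t).1|).sum := by
  induction L with
  | nil => simp [stepL]
  | cons t L ih =>
    simp only [stepL, List.flatMap_cons, List.map_append, List.sum_append,
      List.map_cons, List.sum_cons, List.map_nil, List.sum_nil, add_zero] at ih ⊢
    rw [ih]

lemma coord_abs_le (x : EuclideanSpace ℝ (Fin d)) (j : Fin d) : |x j| ≤ ‖x‖ := by
  rw [EuclideanSpace.norm_eq, ← Real.sqrt_sq_eq_abs]
  apply Real.sqrt_le_sqrt
  have h := Finset.single_le_sum (f := fun i => ‖x i‖ ^ 2)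
    (fun i _ => sq_nonneg _) (Finset.mem_univ j)
  simpa [Real.norm_eq_abs, sq_abs] using h

lemma tEval_bound (n : ℕ) (t : ℝ × (Fin d → ℕ)) (x : EuclideanSpace ℝ (Fin d)) (hx : x ≠ 0) :
    |tEval n t x| ≤ |t.1| * ‖x‖ ^ ((1 : ℤ) - n) := by
  obtain ⟨c, e⟩ := t
  have h0 : (0 : ℝ) < ‖x‖ := norm_pos_iff.2 hx
  have hP : |∏ j, x j ^ e j| ≤ ‖x‖ ^ (∑ j, e j) := by
    rw [Finset.abs_prod, ← Finset.prod_pow_eq_pow_sum]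
    refine Finset.prod_le_prod (fun j _ => abs_nonneg _) (fun j _ => ?_)
    rw [abs_pow]
    exact pow_le_pow_left₀ (abs_nonneg _) (coord_abs_le x j) _
  have h1 : |tEval n (c, e) x|
      = |c| * (|∏ j, x j ^ e j| * ‖x‖ ^ ((1 : ℤ) - n - (∑ j, e j : ℕ))) := by
    rw [tEval, abs_mul, abs_mul, abs_of_pos (zpow_pos h0 _)]
    ring
  have h3 : ‖x‖ ^ (∑ j, e j) * ‖x‖ ^ ((1 : ℤ) - n - (∑ j, e j : ℕ)) = ‖x‖ ^ ((1 : ℤ) - n) := by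
    rw [← zpow_natCast ‖x‖ (∑ j, e j), ← zpow_add₀ h0.ne']
    congr 1
    push_cast
    ring
  rw [h1]
  refine mul_le_mul_of_nonneg_left ?_ (abs_nonneg c)
  calc |∏ j, x j ^ e j| * ‖x‖ ^ ((1 : ℤ) - n - (∑ j, e j : ℕ))
      ≤ ‖x‖ ^ (∑ j, e j) * ‖x‖ ^ ((1 : ℤ) - n - (∑ j, e j : ℕ)) :=
        mul_le_mul_of_nonneg_right hP (le_of_lt (zpow_pos h0 _))
    _ = ‖x‖ ^ ((1 : ℤ) - n) := h3

lemma FL_bound (n : ℕ) (L : List (ℝ × (Fin d → ℕ))) (x : EuclideanSpace ℝ (Fin d))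
    (hx : x ≠ 0) :
    |FL n L x| ≤ ((L.map fun t => |t.1|).sum) * ‖x‖ ^ ((1 : ℤ) - n) := by
  induction L with
  | nil => simp [FL]
  | cons t L ih =>
    simp only [FL, List.map_cons, List.sum_cons] at ih ⊢
    calc |tEval n t x + (L.map fun t => tEval n t x).sum|
        ≤ |tEval n t x| + |(L.map fun t => tEval n t x).sum| := abs_add_le _ _
      _ ≤ |t.1| * ‖x‖ ^ ((1 : ℤ) - n) + ((L.map fun t => |t.1|).sum) * ‖x‖ ^ ((1 : ℤ) - n) :=
          add_le_add (tEval_bound n t x hx) ih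
      _ = (|t.1| + (L.map fun t => |t.1|).sum) * ‖x‖ ^ ((1 : ℤ) - n) := by ring

lemma main_rep (l : List (Fin d)) :
    ∃ L : List (ℝ × (Fin d → ℕ)),
      (∀ t ∈ L, (∑ j, t.2 j) ≤ l.length) ∧
      ((L.map fun t => |t.1|).sum ≤ (3 : ℝ) ^ l.length * (Nat.factorial l.length : ℝ)) ∧
      ∀ x : EuclideanSpace ℝ (Fin d), x ≠ 0 →
        listDeriv l (fun y : EuclideanSpace ℝ (Fin d) => ‖y‖) x = FL l.length L x := by
  induction l with
  | nil =>
    refine ⟨[(1, fun _ => 0)], by simp, by simp, ?_⟩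
    intro x hx
    simp [listDeriv, FL, tEval]
  | cons i l ih =>
    obtain ⟨L, hdeg, hcoef, hrep⟩ := ih
    set n := l.length with hn
    refine ⟨stepL n i L, ?_, ?_, ?_⟩
    · intro t' ht'
      rw [stepL, List.mem_flatMap] at ht'
      obtain ⟨t, htL, hmem⟩ := ht'
      have hS := hdeg t htL
      have hup : ∀ b : ℕ, (∑ j, Function.update t.2 i b j)
          = b + ∑ k ∈ Finset.univ.erase i, t.2 k := by
        intro b
        rw [← Finset.add_sum_erase Finset.univ _ (Finset.mem_univ i), Function.update_self]
        congr 1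
        exact Finset.sum_congr rfl fun k hk => by
          rw [Function.update_of_ne (Finset.ne_of_mem_erase hk)]
      have hsplit : t.2 i + ∑ k ∈ Finset.univ.erase i, t.2 k = ∑ j, t.2 j :=
        Finset.add_sum_erase Finset.univ t.2 (Finset.mem_univ i)
      simp only [List.mem_cons, List.mem_singleton, List.not_mem_nil, or_false] at hmem
      rcases hmem with rfl | rfl
      · simp only [d1, List.length_cons, hup]
        omega
      · simp only [d2, List.length_cons, hup]
        omega
    · have key : ∀ t ∈ L, |(d1 i t).1| + |(d2 n i t).1| ≤ (3 * ((n : ℝ) + 1)) * |t.1| := by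
        intro t ht
        have hS : (∑ j, t.2 j) ≤ n := hdeg t ht
        have hSi : t.2 i ≤ n :=
          le_trans (Finset.single_le_sum (f := fun j => t.2 j)
            (fun _ _ => Nat.zero_le _) (Finset.mem_univ i)) hS
        have h1 : |(t.2 i : ℝ)| ≤ (n : ℝ) := by
          rw [abs_of_nonneg (Nat.cast_nonneg _)]
          exact_mod_cast hSi
        have hSr : (∑ j, (t.2 j : ℝ)) ≤ (n : ℝ) := by exact_mod_cast hS
        have hSr0 : (0 : ℝ) ≤ ∑ j, (t.2 j : ℝ) :=
          Finset.sum_nonneg fun _ _ => Nat.cast_nonneg _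
        have hn0 : (0 : ℝ) ≤ (n : ℝ) := Nat.cast_nonneg _
        have h2 : |1 - (n : ℝ) - ∑ j, (t.2 j : ℝ)| ≤ 2 * (n : ℝ) + 1 :=
          abs_le.mpr ⟨by linarith, by linarith⟩
        simp only [d1, d2]
        rw [abs_mul, abs_mul]
        push_cast
        nlinarith [abs_nonneg t.1, mul_le_mul_of_nonneg_left h1 (abs_nonneg t.1),
          mul_le_mul_of_nonneg_left h2 (abs_nonneg t.1)]
      calc ((stepL n i L).map fun t => |t.1|).sum
          = (L.map fun t => |(d1 i t).1| + |(d2 n i t).1|).sum := sum_abs_stepL n i L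
        _ ≤ (L.map fun t => (3 * ((n : ℝ) + 1)) * |t.1|).sum := List.sum_le_sum key
        _ = (3 * ((n : ℝ) + 1)) * (L.map fun t => |t.1|).sum := List.sum_map_mul_left _ _ _
        _ ≤ (3 * ((n : ℝ) + 1)) * ((3 : ℝ) ^ n * (Nat.factorial n : ℝ)) := by
            refine mul_le_mul_of_nonneg_left hcoef (by positivity)
        _ = (3 : ℝ) ^ (i :: l).length * (Nat.factorial (i :: l).length : ℝ) := by
            simp only [List.length_cons, ← hn, Nat.factorial_succ]
            push_cast
            ring
    · intro x hx
      have hev : listDeriv l (fun y : EuclideanSpace ℝ (Fin d) => ‖y‖) =ᶠ[nhds x] FL n L :=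
        Filter.eventuallyEq_of_mem (isOpen_compl_singleton.mem_nhds hx)
          (fun y hy => hrep y hy)
      obtain ⟨Φ, hΦ, hval⟩ := list_step n L i hx
      show pd i (listDeriv l (fun y : EuclideanSpace ℝ (Fin d) => ‖y‖)) x = _
      rw [pd]
      rw [hev.fderiv_eq, hΦ.fderiv]
      exact hval

lemma fact_le (hd : 1 ≤ d) : ∀ n : ℕ, ∀ α : Fin d → ℕ, (∑ i, α i) = n →
    Nat.factorial n ≤ d ^ n * ∏ i, Nat.factorial (α i) := by
  intro n
  induction n with
  | zero =>
    intro α h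
    have h1 : 1 ≤ ∏ i, Nat.factorial (α i) :=
      Finset.one_le_prod' fun i _ => Nat.one_le_iff_ne_zero.2 (Nat.factorial_ne_zero _)
    simpa using h1
  | succ n ih =>
    intro α h
    have hne : (Finset.univ : Finset (Fin d)).Nonempty := ⟨⟨0, hd⟩, Finset.mem_univ _⟩
    obtain ⟨i, -, hmax⟩ := Finset.exists_max_image Finset.univ α hne
    have h1 : n + 1 ≤ d * α i := by
      calc n + 1 = ∑ j, α j := h.symm
        _ ≤ ∑ _j : Fin d, α i := Finset.sum_le_sum fun j _ => hmax j (Finset.mem_univ j)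
        _ = d * α i := by simp [Finset.sum_const, Finset.card_univ, mul_comm]
    have hαi : 1 ≤ α i := by
      rcases Nat.eq_zero_or_pos (α i) with h0 | h0
      · rw [h0, mul_zero] at h1; omega
      · exact h0
    have hsplit : α i + ∑ k ∈ Finset.univ.erase i, α k = ∑ j, α j :=
      Finset.add_sum_erase Finset.univ α (Finset.mem_univ i)
    have hup : ∀ b : ℕ, (∑ j, Function.update α i b j)
        = b + ∑ k ∈ Finset.univ.erase i, α k := by
      intro b
      rw [← Finset.add_sum_erase Finset.univ _ (Finset.mem_univ i), Function.update_self]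
      congr 1
      exact Finset.sum_congr rfl fun k hk => by
        rw [Function.update_of_ne (Finset.ne_of_mem_erase hk)]
    have hsum' : (∑ j, Function.update α i (α i - 1) j) = n := by
      rw [hup]; omega
    have hIH := ih (Function.update α i (α i - 1)) hsum'
    have hprodup : (∏ j, Nat.factorial (Function.update α i (α i - 1) j))
        = Nat.factorial (α i - 1) * ∏ k ∈ Finset.univ.erase i, Nat.factorial (α k) := by
      rw [← Finset.mul_prod_erase Finset.univ _ (Finset.mem_univ i), Function.update_self]
      congr 1
      exact Finset.prod_congr rfl fun k hk => by
        rw [Function.update_of_ne (Finset.ne_of_mem_erase hk)]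
    have hprodsplit : (∏ j, Nat.factorial (α j))
        = Nat.factorial (α i) * ∏ k ∈ Finset.univ.erase i, Nat.factorial (α k) :=
      (Finset.mul_prod_erase Finset.univ _ (Finset.mem_univ i)).symm
    calc Nat.factorial (n + 1) = (n + 1) * Nat.factorial n := Nat.factorial_succ n
      _ ≤ (n + 1) * (d ^ n * ∏ j, Nat.factorial (Function.update α i (α i - 1) j)) :=
          Nat.mul_le_mul_left _ hIH
      _ ≤ (d * α i) * (d ^ n * ∏ j, Nat.factorial (Function.update α i (α i - 1) j)) :=
          Nat.mul_le_mul_right _ h1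
      _ = d ^ (n + 1) * (α i * ∏ j, Nat.factorial (Function.update α i (α i - 1) j)) := by
          ring
      _ = d ^ (n + 1) * ∏ j, Nat.factorial (α j) := by
          rw [hprodup, hprodsplit, ← Nat.mul_factorial_pred (Nat.one_le_iff_ne_zero.mp hαi)]
          ring

end S13

/-- derivative bounds for the Euclidean norm away from the origin. -/
theorem stmt13 {d : ℕ} (hd : 1 ≤ d) :
    ∀ x : EuclideanSpace ℝ (Fin d), x ≠ 0 → ∀ α : Fin d → ℕ,
      |mderiv α (fun y => ‖y‖) x| ≤
        ((3 * d : ℕ) : ℝ) ^ (mdeg α + 1) * (mfact α : ℝ) * ‖x‖ ^ ((1 : ℝ) - (mdeg α : ℝ)) := by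
  intro x hx α
  obtain ⟨L, hdeg, hcoef, hrep⟩ :=
    S13.main_rep (Finset.univ.toList.flatMap fun i => List.replicate (α i) i)
  have hlen : (Finset.univ.toList.flatMap fun i => List.replicate (α i) i).length = mdeg α := by
    rw [List.length_flatMap]
    simp only [Function.comp_def, List.length_replicate]
    rw [Finset.sum_map_toList]
    rfl
  rw [hlen] at hcoef hrep
  have h2 := S13.FL_bound (mdeg α) L x hx
  rw [mderiv, hrep x hx]
  have hnat : 3 ^ (mdeg α) * Nat.factorial (mdeg α) ≤ (3 * d) ^ (mdeg α + 1) * mfact α := by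
    have hf := S13.fact_le hd (mdeg α) α rfl
    calc 3 ^ mdeg α * Nat.factorial (mdeg α)
        ≤ 3 ^ mdeg α * (d ^ mdeg α * ∏ i, Nat.factorial (α i)) := Nat.mul_le_mul_left _ hf
      _ = (3 * d) ^ mdeg α * mfact α := by rw [mul_pow, mfact]; ring
      _ ≤ (3 * d) ^ (mdeg α + 1) * mfact α :=
          Nat.mul_le_mul_right _ (Nat.pow_le_pow_right (by omega) (Nat.le_succ _))
  have hco2 : (List.map (fun t => |t.1|) L).sum
      ≤ ((3 * d : ℕ) : ℝ) ^ (mdeg α + 1) * (mfact α : ℝ) := by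
    refine hcoef.trans ?_
    have : ((3 : ℝ)) ^ mdeg α * (Nat.factorial (mdeg α) : ℝ)
        ≤ (((3 * d) ^ (mdeg α + 1) * mfact α : ℕ) : ℝ) := by exact_mod_cast hnat
    refine this.trans_eq ?_
    push_cast
    ring
  have hrpow : ‖x‖ ^ ((1 : ℝ) - (mdeg α : ℝ)) = ‖x‖ ^ ((1 : ℤ) - (mdeg α : ℕ)) := by
    rw [show (1 : ℝ) - (mdeg α : ℝ) = (((1 : ℤ) - (mdeg α : ℕ) : ℤ) : ℝ) by push_cast; ring,
      Real.rpow_intCast]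
  rw [hrpow]
  exact h2.trans (mul_le_mul_of_nonneg_right hco2
    (le_of_lt (zpow_pos (norm_pos_iff.2 hx) _)))
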